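/- A TU game (N,v) with veto player a is totally balanced (every subgame has nonempty core) if and only if it is monotonic. -/
import Mathlib


open Finset

/-- A veto game (with `v({a}) = 0`) is totally balanced (every subgame has a
nonempty core) if and only if it is monotonic. -/
theorem stmt9 {ι : Type*} [Fintype ι] [DecidableEq ι] (v : Finset ι → ℝ) (a : ι)
    (hempty : v ∅ = 0)
    (hveto : ∀ S : Finset ι, a ∉ S → v S = 0)
    (hva : v {a} = 0) :
    (∀ T : Finset ι, T.Nonempty →
        ∃ x : ι → ℝ, (∑ i ∈ T, x i) = v T ∧ ∀ S ⊆ T, v S ≤ ∑ i ∈ S, x i)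
      ↔ (∀ S T : Finset ι, S ⊆ T → v S ≤ v T) := by
  constructor
  · intro h S T hST
    rcases T.eq_empty_or_nonempty with rfl | hT
    · simp [Finset.subset_empty.mp hST, hempty]
    obtain ⟨x, hsum, hcore⟩ := h T hT
    have hnn : ∀ i ∈ T, 0 ≤ x i := by
      intro i hi
      have hs : ({i} : Finset ι) ⊆ T := Finset.singleton_subset_iff.mpr hi
      have := hcore {i} hs
      by_cases hia : i = a
      · subst hia; simpa [hva] using this
      · have : v {i} = 0 := hveto _ (by simp [Ne.symm hia])
        have h2 := hcore {i} hs
        rw [this] at h2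
        simpa using h2
    calc v S ≤ ∑ i ∈ S, x i := hcore S hST
      _ ≤ ∑ i ∈ T, x i := Finset.sum_le_sum_of_subset_of_nonneg hST
          (fun i hi _ => hnn i hi)
      _ = v T := hsum
  · intro hmono T hT
    by_cases haT : a ∈ T
    · refine ⟨fun i => if i = a then v T else 0, ?_, ?_⟩
      · rw [Finset.sum_ite_eq' T a (fun _ => v T)]
        simp [haT]
      · intro S hS
        rw [show (∑ i ∈ S, (fun i => if i = a then v T else 0) i) = if a ∈ S then v T else 0 from Finset.sum_ite_eq' S a (fun _ => v T)]
        by_cases haS : a ∈ S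
        · simpa [haS] using hmono S T hS
        · simp [haS, hveto S haS]
    · refine ⟨fun _ => 0, ?_, ?_⟩
      · simp [hveto T haT]
      · intro S hS
        simp [hveto S (fun h => haT (hS h))]
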